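/- Let X be a nonzero real Banach space and suppose there exists a continuous linear operator A : X → X* which is symmetric (⟨Ax, y⟩ = ⟨x, Ay⟩ for all x, y ∈ X), satisfies ⟨Ax, x⟩ ≥ 0 for all x ∈ X, and is invertible with continuous inverse. Then the bilinear form M(x, y) := ⟨Ax, y⟩ is an inner product on X (symmetric, bilinear, and positive definite), and the norm it induces is equivalent to the original norm of X: ‖A⁻¹‖⁻¹·‖x‖² ≤ M(x, x) ≤ ‖A‖·‖x‖² for all x ∈ X. In particular, X is isomorphic to a real Hilbert space. -/

import Mathlib

/-- Type synonym used to carry the Hilbert space structure. -/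
def HilbertCopy (X : Type u) : Type u := X

instance {X : Type u} [i : AddCommGroup X] : AddCommGroup (HilbertCopy X) := i
instance {X : Type u} [AddCommGroup X] [i : Module ℝ X] : Module ℝ (HilbertCopy X) := i

/-- If a nonzero real Banach space `X` admits a continuous linear operator `A : X → X*`
which is symmetric, positive semidefinite and invertible with continuous inverse, then
`M(x, y) := ⟪Ax, y⟫` is an inner product on `X` (symmetric, bilinear and positive
definite), its induced norm is equivalent to the original norm:
`‖A⁻¹‖⁻¹·‖x‖² ≤ M(x,x) ≤ ‖A‖·‖x‖²`, and, in particular, `X` is isomorphic to a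
real Hilbert space. -/
theorem stmt7 {X : Type u} [NormedAddCommGroup X] [NormedSpace ℝ X]
    [CompleteSpace X] [Nontrivial X]
    (A : X ≃L[ℝ] StrongDual ℝ X)
    (hsym : ∀ x y : X, A x y = A y x)
    (hpos : ∀ x : X, 0 ≤ A x x) :
    (∀ x y : X, A x y = A y x) ∧
    (∀ (a b : ℝ) (x y z : X), A (a • x + b • y) z = a * A x z + b * A y z) ∧
    (∀ (a b : ℝ) (x y z : X), A x (a • y + b • z) = a * A x y + b * A x z) ∧
    (∀ x : X, x ≠ 0 → 0 < A x x) ∧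
    (∀ x : X, ‖(A.symm : StrongDual ℝ X →L[ℝ] X)‖⁻¹ * ‖x‖ ^ 2 ≤ A x x ∧
      A x x ≤ ‖(A : X →L[ℝ] StrongDual ℝ X)‖ * ‖x‖ ^ 2) ∧
    ∃ (H : Type u) (_ : NormedAddCommGroup H) (_ : InnerProductSpace ℝ H)
      (_ : CompleteSpace H), Nonempty (X ≃L[ℝ] H) := by
  -- Cauchy–Schwarz for the form
  have hCS : ∀ x y : X, (A x y) * (A x y) ≤ A x x * A y y := by
    intro x y
    have key : ∀ t : ℝ, 0 ≤ (A y y) * (t * t) + (2 * A x y) * t + A x x := by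
      intro t
      have h := hpos (x + t • y)
      have hexp : A (x + t • y) (x + t • y)
          = A x x + t * A x y + t * A y x + t * t * A y y := by
        simp [map_add, map_smul, smul_eq_mul]
        ring
      have h' : 0 ≤ A x x + t * A x y + t * A y x + t * t * A y y := hexp ▸ h
      have hs := hsym x y
      rw [← hs] at h'
      linarith [h']
    have hd := discrim_le_zero key
    rw [discrim] at hd
    nlinarith [hd]
  -- positive definiteness
  have hdef : ∀ x : X, x ≠ 0 → 0 < A x x := by
    intro x hx
    rcases (hpos x).lt_or_eq with h | h
    · exact h
    · exfalso
      apply hx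
      have hAx : A x = 0 := by
        ext y
        have := hCS x y
        rw [← h] at this
        have h0 : (A x y) * (A x y) ≤ 0 := by linarith
        have := mul_self_nonneg (A x y)
        have : A x y = 0 := by nlinarith
        simpa using this
      exact A.injective (by simpa using hAx)
  -- upper bound
  have upper : ∀ x : X, A x x ≤ ‖(A : X →L[ℝ] StrongDual ℝ X)‖ * ‖x‖ ^ 2 := by
    intro x
    have h1 : ‖A x x‖ ≤ ‖A x‖ * ‖x‖ := (A x).le_opNorm x
    have h2 : ‖A x‖ ≤ ‖(A : X →L[ℝ] StrongDual ℝ X)‖ * ‖x‖ :=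
      (A : X →L[ℝ] StrongDual ℝ X).le_opNorm x
    have h3 : A x x ≤ ‖A x x‖ := le_abs_self _
    nlinarith [norm_nonneg x, norm_nonneg (A x)]
  -- positivity of ‖A.symm‖
  set s : ℝ := ‖(A.symm : StrongDual ℝ X →L[ℝ] X)‖ with hs_def
  have hs_nonneg : 0 ≤ s := ContinuousLinearMap.opNorm_nonneg _
  have hs_pos : 0 < s := by
    obtain ⟨x, hx⟩ := exists_ne (0 : X)
    have h1 : ‖x‖ ≤ s * ‖A x‖ := by
      have := (A.symm : StrongDual ℝ X →L[ℝ] X).le_opNorm (A x)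
      simpa using this
    rcases hs_nonneg.lt_or_eq with h | h
    · exact h
    · exfalso
      apply hx
      rw [← h] at h1
      simp at h1
      exact h1
  -- lower bound: ‖x‖² ≤ s * A x x
  have lower : ∀ x : X, ‖x‖ ^ 2 ≤ s * A x x := by
    intro x
    have hM : ‖x‖ ≤ Real.sqrt (s * A x x) := by
      apply NormedSpace.norm_le_dual_bound ℝ x (Real.sqrt_nonneg _)
      intro f
      set y := A.symm f with hy
      have hfz : ∀ z : X, f z = A y z := by
        intro z
        have : A y = f := by simp [hy]
        rw [this]
      have hAyy : A y y ≤ s * ‖f‖ * ‖f‖ := by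
        have h1 : A y y = f y := (hfz y).symm
        have h2 : ‖f y‖ ≤ ‖f‖ * ‖y‖ := f.le_opNorm y
        have h3 : ‖y‖ ≤ s * ‖f‖ := by
          have := (A.symm : StrongDual ℝ X →L[ℝ] X).le_opNorm f
          simpa [hy] using this
        have h4 : f y ≤ ‖f y‖ := le_abs_self _
        nlinarith [norm_nonneg f, norm_nonneg y]
      have hsq : (f x) * (f x) ≤ (A x x * s) * (‖f‖ * ‖f‖) := by
        have h1 : f x = A x y := by rw [hfz x]; exact hsym y x
        have h2 := hCS x y
        have h3 := hpos x
        rw [h1]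
        nlinarith [mul_le_mul_of_nonneg_left hAyy h3, h2]
      have hMf : 0 ≤ Real.sqrt (s * A x x) * ‖f‖ :=
        mul_nonneg (Real.sqrt_nonneg _) (norm_nonneg _)
      refine nonneg_le_nonneg_of_sq_le_sq hMf ?_
      have hss : Real.sqrt (s * A x x) * Real.sqrt (s * A x x) = s * A x x :=
        Real.mul_self_sqrt (mul_nonneg hs_nonneg (hpos x))
      have hfx : ‖f x‖ * ‖f x‖ = (f x) * (f x) := by
        rw [← abs_mul_abs_self (f x)]; rfl
      nlinarith [hsq, hss, hfx]
    have := mul_le_mul_of_nonneg_left hM (norm_nonneg x)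
    have hss : Real.sqrt (s * A x x) * Real.sqrt (s * A x x) = s * A x x :=
      Real.mul_self_sqrt (mul_nonneg hs_nonneg (hpos x))
    nlinarith [hM, norm_nonneg x, Real.sqrt_nonneg (s * A x x)]
  -- the five easy conjuncts
  refine ⟨hsym, ?_, ?_, hdef, ?_, ?_⟩
  · intro a b x y z
    simp [map_add, map_smul, smul_eq_mul]
  · intro a b x y z
    simp [map_add, map_smul, smul_eq_mul]
  · intro x
    constructor
    · have hx2 := lower x
      have := mul_le_mul_of_nonneg_left hx2 (inv_nonneg.mpr hs_nonneg)
      rwa [← mul_assoc, inv_mul_cancel₀ hs_pos.ne', one_mul] at this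
    · exact upper x
  -- the Hilbert space
  · let core : InnerProductSpace.Core ℝ (HilbertCopy X) :=
      { inner := fun x y => A x y
        conj_inner_symm := fun x y => (star_trivial _).trans (hsym y x)
        re_inner_nonneg := fun x => by simpa using hpos x
        add_left := fun x y z => by exact (congrArg (fun f => f z) (map_add A (x : X) (y : X))).trans (ContinuousLinearMap.add_apply _ _ _)
        smul_left := fun x y r => by simp [map_smul, smul_eq_mul]; exact (congrArg (fun f => f y) (map_smul A r (x : X))).trans (ContinuousLinearMap.smul_apply _ _ _)
        definite := fun x hx => by
          by_contra h
          exact (hdef x h).ne' (by simpa using hx) }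
    letI : NormedAddCommGroup (HilbertCopy X) := core.toNormedAddCommGroup
    letI : InnerProductSpace ℝ (HilbertCopy X) := InnerProductSpace.ofCore core.toCore
    have hnorm : ∀ z : HilbertCopy X, A z z = ‖z‖ ^ 2 := by
      intro z
      rw [← real_inner_self_eq_norm_sq]
      rfl
    let e : X ≃ₗ[ℝ] HilbertCopy X := LinearEquiv.refl ℝ X
    set CA : ℝ := ‖(A : X →L[ℝ] StrongDual ℝ X)‖ with hCA
    have hCA_nonneg : 0 ≤ CA := ContinuousLinearMap.opNorm_nonneg _
    have h_to : ∀ x : X, ‖e x‖ ≤ Real.sqrt CA * ‖x‖ := by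
      intro x
      have h1 : A x x ≤ CA * ‖x‖ ^ 2 := upper x
      have h2 : (‖e x‖ : ℝ) ^ 2 = A x x := (hnorm (e x)).symm
      have hMf : 0 ≤ Real.sqrt CA * ‖x‖ :=
        mul_nonneg (Real.sqrt_nonneg _) (norm_nonneg _)
      refine nonneg_le_nonneg_of_sq_le_sq hMf ?_
      have hss : Real.sqrt CA * Real.sqrt CA = CA := Real.mul_self_sqrt hCA_nonneg
      nlinarith [norm_nonneg (e x), norm_nonneg x]
    have h_inv : ∀ y : HilbertCopy X, ‖e.symm y‖ ≤ Real.sqrt s * ‖y‖ := by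
      intro y
      have h1 : ‖e.symm y‖ ^ 2 ≤ s * A (e.symm y) (e.symm y) := lower (e.symm y)
      have h2 : A (e.symm y) (e.symm y) = ‖y‖ ^ 2 := hnorm y
      have hMf : 0 ≤ Real.sqrt s * ‖y‖ :=
        mul_nonneg (Real.sqrt_nonneg _) (norm_nonneg _)
      refine nonneg_le_nonneg_of_sq_le_sq hMf ?_
      have hss : Real.sqrt s * Real.sqrt s = s := Real.mul_self_sqrt hs_nonneg
      nlinarith [norm_nonneg (e.symm y), norm_nonneg y]
    let e' : X ≃L[ℝ] HilbertCopy X :=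
      e.toContinuousLinearEquivOfBounds (Real.sqrt CA) (Real.sqrt s) h_to h_inv
    letI : CompleteSpace (HilbertCopy X) :=
      (e'.isUniformEmbedding.toIsUniformInducing.completeSpace_congr e'.surjective).mp ‹_›
    exact ⟨HilbertCopy X, inferInstance, inferInstance, inferInstance, ⟨e'⟩⟩
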